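/- For any natural numbers d and s with d | s and any ε > 0, the double sum ∑'_{m} ∑'_{n} gcd(m,n,d)^{1/2}/(|m|·|n|), taken over nonzero integers m, n in (−s/2, s/2], is ≪_ε s^ε. -/

import Mathlib

open scoped Classical

lemma harmonic_le_log (s : ℕ) :
    ∑ k ∈ Finset.Icc 1 s, (1 : ℝ) / k ≤ 1 + Real.log s := by
  induction s with
  | zero => simp
  | succ n ih =>
    rw [Finset.sum_Icc_succ_top (by omega)]
    rcases Nat.eq_zero_or_pos n with h | h
    · subst h; simp
    · have hn : (0:ℝ) < n := by exact_mod_cast h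
      have h1 : Real.log ((n:ℝ)/((n:ℝ)+1)) ≤ (n:ℝ)/((n:ℝ)+1) - 1 :=
        Real.log_le_sub_one_of_pos (by positivity)
      rw [Real.log_div (ne_of_gt hn) (by positivity)] at h1
      have h2 : (n:ℝ)/((n:ℝ)+1) - 1 = -(1/((n:ℝ)+1)) := by field_simp; ring
      push_cast
      rw [h2] at h1
      linarith

lemma part_le_harmonic (s : ℕ) (P : Finset ℤ)
    (hP : ∀ t ∈ P, t ≠ 0 ∧ |t| ≤ (s:ℤ)) (hinj : ∀ t ∈ P, ∀ t' ∈ P, t.natAbs = t'.natAbs → t = t') :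
    ∑ t ∈ P, 1 / |(t:ℝ)| ≤ ∑ k ∈ Finset.Icc 1 s, (1 : ℝ) / k := by
  have e1 : ∑ t ∈ P, 1 / |(t:ℝ)| = ∑ t ∈ P, (1 : ℝ) / (t.natAbs : ℕ) := by
    refine Finset.sum_congr rfl fun t _ => ?_
    rw [Nat.cast_natAbs, Int.cast_abs]
  rw [e1, ← Finset.sum_image (g := Int.natAbs) (f := fun k : ℕ => (1:ℝ)/k) hinj]
  apply Finset.sum_le_sum_of_subset_of_nonneg
  · intro k hk
    simp only [Finset.mem_image] at hk
    obtain ⟨t, ht, rfl⟩ := hk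
    obtain ⟨ht0, hts⟩ := hP t ht
    have := Int.abs_eq_natAbs t
    simp only [Finset.mem_Icc]
    omega
  · intro k _ _; positivity

lemma sum_absinv_le (s : ℕ) :
    ∑ t ∈ (Finset.Icc (-(s:ℤ)) (s:ℤ)).filter (fun t => t ≠ 0), 1 / |(t:ℝ)| ≤
      2 * (1 + Real.log s) := by
  set B := (Finset.Icc (-(s:ℤ)) (s:ℤ)).filter (fun t => t ≠ 0) with hB
  have hmem : ∀ t ∈ B, t ≠ 0 ∧ |t| ≤ (s:ℤ) := by
    intro t ht
    rw [hB, Finset.mem_filter, Finset.mem_Icc] at ht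
    refine ⟨ht.2, ?_⟩
    rw [abs_le]; exact ⟨ht.1.1, ht.1.2⟩
  rw [← Finset.sum_filter_add_sum_filter_not B (fun t => 0 < t)]
  have hpos : ∑ t ∈ B.filter (fun t => 0 < t), 1 / |(t:ℝ)| ≤
      ∑ k ∈ Finset.Icc 1 s, (1 : ℝ) / k := by
    apply part_le_harmonic
    · intro t ht; exact hmem t (Finset.mem_filter.mp ht).1
    · intro t ht t' ht' h
      have h1 := (Finset.mem_filter.mp ht).2
      have h2 := (Finset.mem_filter.mp ht').2
      omega
  have hneg : ∑ t ∈ B.filter (fun t => ¬ 0 < t), 1 / |(t:ℝ)| ≤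
      ∑ k ∈ Finset.Icc 1 s, (1 : ℝ) / k := by
    apply part_le_harmonic
    · intro t ht; exact hmem t (Finset.mem_filter.mp ht).1
    · intro t ht t' ht' h
      have h1 := (Finset.mem_filter.mp ht).2
      have h2 := (Finset.mem_filter.mp ht').2
      have h3 := (hmem t (Finset.mem_filter.mp ht).1).1
      have h4 := (hmem t' (Finset.mem_filter.mp ht').1).1
      omega
  have := harmonic_le_log s
  linarith

/-- For `d ∣ s` and any `ε > 0`, the double sum
`∑'_{m} ∑'_{n} gcd(m,n,d)^{1/2}/(|m||n|)` over nonzero `m,n ∈ (−s/2, s/2]` is `≪_ε s^ε`. -/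
theorem gcd_double_harmonic_sum (ε : ℝ) (hε : 0 < ε) :
    ∃ C : ℝ, 0 < C ∧ ∀ d s : ℕ, d ∣ s →
      ∑ m ∈ (Finset.Icc (-(s : ℤ)) (s : ℤ)).filter
          (fun m : ℤ => m ≠ 0 ∧ -(s : ℝ) / 2 < (m : ℝ) ∧ (m : ℝ) ≤ (s : ℝ) / 2),
        ∑ n ∈ (Finset.Icc (-(s : ℤ)) (s : ℤ)).filter
            (fun n : ℤ => n ≠ 0 ∧ -(s : ℝ) / 2 < (n : ℝ) ∧ (n : ℝ) ≤ (s : ℝ) / 2),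
          (fun m n : ℤ =>
            Real.sqrt (Int.gcd m (Int.gcd n (d : ℤ))) / (|(m : ℝ)| * |(n : ℝ)|)) m n ≤
        C * (s : ℝ) ^ ε := by
  set K := ∑' n : ℕ, (n:ℝ) ^ (-(3/2) : ℝ) with hK
  have hK0 : 0 ≤ K := tsum_nonneg fun n => Real.rpow_nonneg (Nat.cast_nonneg n) _
  have hKsum : Summable (fun n : ℕ => (n:ℝ) ^ (-(3/2) : ℝ)) :=
    Real.summable_nat_rpow.mpr (by norm_num)
  refine ⟨4 * K * (1 + 2/ε)^2 + 1, by positivity, ?_⟩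
  intro d s hds
  by_cases hs : s = 0
  · subst hs
    have hempty : (Finset.Icc (-(0:ℕ) : ℤ) ((0:ℕ) : ℤ)).filter
        (fun m : ℤ => m ≠ 0 ∧ -((0:ℕ) : ℝ) / 2 < (m : ℝ) ∧ (m : ℝ) ≤ ((0:ℕ) : ℝ) / 2) = ∅ := by
      ext m
      simp only [Finset.mem_filter, Finset.mem_Icc, Finset.notMem_empty, iff_false]
      rintro ⟨⟨h1, h2⟩, h3, h4, h5⟩
      push_cast at h4 h5
      linarith
    rw [hempty]
    simp [Real.zero_rpow (ne_of_gt hε)]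
  -- main case
  have hs1 : 1 ≤ s := Nat.one_le_iff_ne_zero.mpr hs
  have hd : d ≠ 0 := by rintro rfl; exact hs (Nat.eq_zero_of_zero_dvd hds)
  have hs0 : (0:ℝ) < s := by exact_mod_cast hs1
  set A := (Finset.Icc (-(s : ℤ)) (s : ℤ)).filter
      (fun m : ℤ => m ≠ 0 ∧ -(s : ℝ) / 2 < (m : ℝ) ∧ (m : ℝ) ≤ (s : ℝ) / 2) with hA
  set L := 1 + Real.log s with hLdef
  have hL0 : 0 ≤ L := by
    rw [hLdef]
    have := Real.log_nonneg (show (1:ℝ) ≤ (s:ℝ) by exact_mod_cast hs1)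
    linarith
  set U : ℕ → ℝ := fun β => ∑ m ∈ A, if (β:ℤ) ∣ m then 1/|(m:ℝ)| else 0 with hU
  have hU0 : ∀ β, 0 ≤ U β := by
    intro β
    apply Finset.sum_nonneg
    intro m _
    split_ifs <;> positivity
  -- membership facts about A
  have hAmem : ∀ m ∈ A, m ≠ 0 ∧ |m| ≤ (s:ℤ) := by
    intro m hm
    rw [hA, Finset.mem_filter, Finset.mem_Icc] at hm
    exact ⟨hm.2.1, abs_le.mpr ⟨hm.1.1, hm.1.2⟩⟩
  -- step 2 : bound on U
  have step2 : ∀ β ∈ d.divisors, U β ≤ 2 / β * L := by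
    intro β hβ
    have hβ1 : 1 ≤ β := (Nat.pos_of_mem_divisors hβ)
    have hβ0 : (0:ℝ) < β := by exact_mod_cast hβ1
    have hβz : (β:ℤ) ≠ 0 := by exact_mod_cast (by omega : β ≠ 0)
    show ∑ m ∈ A, (if (β:ℤ) ∣ m then 1/|(m:ℝ)| else 0) ≤ 2 / β * L
    rw [← Finset.sum_filter (fun m : ℤ => (β:ℤ) ∣ m) (fun m => 1/|(m:ℝ)|)]
    set Aβ := A.filter (fun m : ℤ => (β:ℤ) ∣ m) with hAβ
    have e1 : ∑ m ∈ Aβ, 1/|(m:ℝ)| = ∑ m ∈ Aβ, (1/(β:ℝ)) * (1/|((m / (β:ℤ) : ℤ) : ℝ)|) := by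
      refine Finset.sum_congr rfl fun m hm => ?_
      have hdvd : (β:ℤ) ∣ m := (Finset.mem_filter.mp hm).2
      have hm0 : m ≠ 0 := (hAmem m (Finset.mem_filter.mp hm).1).1
      have hmeq : (β:ℤ) * (m / (β:ℤ)) = m := Int.mul_ediv_cancel' hdvd
      have habs : |(m:ℝ)| = (β:ℝ) * |((m / (β:ℤ) : ℤ) : ℝ)| := by
        rw [← abs_of_pos hβ0, ← abs_mul]
        congr 1
        rw [← Int.cast_natCast, ← Int.cast_mul, hmeq]
      rw [habs]
      have hq0 : ((m / (β:ℤ) : ℤ) : ℝ) ≠ 0 := by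
        intro h
        have : (m / (β:ℤ) : ℤ) = 0 := by exact_mod_cast h
        rw [this, mul_zero] at hmeq
        exact hm0 hmeq.symm
      field_simp
    rw [e1]
    have hinj : ∀ m ∈ Aβ, ∀ m' ∈ Aβ, m / (β:ℤ) = m' / (β:ℤ) → m = m' := by
      intro m hm m' hm' h
      have h1 : (β:ℤ) * (m / (β:ℤ)) = m := Int.mul_ediv_cancel' (Finset.mem_filter.mp hm).2
      have h2 : (β:ℤ) * (m' / (β:ℤ)) = m' := Int.mul_ediv_cancel' (Finset.mem_filter.mp hm').2
      rw [← h1, ← h2, h]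
    rw [← Finset.sum_image (g := fun m : ℤ => m / (β:ℤ))
      (f := fun t : ℤ => (1/(β:ℝ)) * (1/|(t:ℝ)|)) hinj]
    have hsub : Aβ.image (fun m : ℤ => m / (β:ℤ)) ⊆
        (Finset.Icc (-(s:ℤ)) (s:ℤ)).filter (fun t => t ≠ 0) := by
      intro t ht
      simp only [Finset.mem_image] at ht
      obtain ⟨m, hm, rfl⟩ := ht
      have hdvd : (β:ℤ) ∣ m := (Finset.mem_filter.mp hm).2
      have hm0 : m ≠ 0 := (hAmem m (Finset.mem_filter.mp hm).1).1
      have hms : |m| ≤ (s:ℤ) := (hAmem m (Finset.mem_filter.mp hm).1).2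
      have hmeq : (β:ℤ) * (m / (β:ℤ)) = m := Int.mul_ediv_cancel' hdvd
      have habs : |m / (β:ℤ)| ≤ |m| := Int.abs_ediv_le_abs m (β:ℤ)
      rw [Finset.mem_filter, Finset.mem_Icc]
      constructor
      · constructor
        · linarith [neg_abs_le (m / (β:ℤ)), habs, abs_le.mp hms]
        · linarith [le_abs_self (m / (β:ℤ)), habs]
      · intro h
        rw [h, mul_zero] at hmeq
        exact hm0 hmeq.symm
    calc ∑ t ∈ Aβ.image (fun m : ℤ => m / (β:ℤ)), (1/(β:ℝ)) * (1/|(t:ℝ)|)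
        ≤ ∑ t ∈ (Finset.Icc (-(s:ℤ)) (s:ℤ)).filter (fun t => t ≠ 0),
            (1/(β:ℝ)) * (1/|(t:ℝ)|) := by
          apply Finset.sum_le_sum_of_subset_of_nonneg hsub
          intro t _ _; positivity
      _ = (1/(β:ℝ)) * ∑ t ∈ (Finset.Icc (-(s:ℤ)) (s:ℤ)).filter (fun t => t ≠ 0),
            1/|(t:ℝ)| := by rw [Finset.mul_sum]
      _ ≤ (1/(β:ℝ)) * (2 * L) := by
          apply mul_le_mul_of_nonneg_left _ (by positivity)
          exact sum_absinv_le s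
      _ = 2 / β * L := by ring
  -- step 1 : gcd split
  have step1 : ∑ m ∈ A, ∑ n ∈ A,
      (fun m n : ℤ =>
        Real.sqrt (Int.gcd m (Int.gcd n (d : ℤ))) / (|(m : ℝ)| * |(n : ℝ)|)) m n ≤
      ∑ β ∈ d.divisors, Real.sqrt β * U β * U β := by
    have ptwise : ∀ m ∈ A, ∀ n ∈ A,
        Real.sqrt (Int.gcd m (Int.gcd n (d : ℤ))) / (|(m : ℝ)| * |(n : ℝ)|) ≤
        ∑ β ∈ d.divisors,
          (Real.sqrt β * (if (β:ℤ) ∣ m then 1/|(m:ℝ)| else 0)) *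
            (if (β:ℤ) ∣ n then 1/|(n:ℝ)| else 0) := by
      intro m hm n hn
      have hm0 : m ≠ 0 := (hAmem m hm).1
      have hn0 : n ≠ 0 := (hAmem n hn).1
      set g := Int.gcd m ((Int.gcd n (d:ℤ) : ℕ) : ℤ) with hg
      have hgd : g ∣ d := by
        have h1 : (g:ℤ) ∣ ((Int.gcd n (d:ℤ) : ℕ) : ℤ) := Int.gcd_dvd_right _ _
        have h2 : ((Int.gcd n (d:ℤ) : ℕ) : ℤ) ∣ ((d:ℕ) : ℤ) := Int.gcd_dvd_right _ _
        exact_mod_cast h1.trans h2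
      have hgm : (g:ℤ) ∣ m := Int.gcd_dvd_left _ _
      have hgn : (g:ℤ) ∣ n := by
        have h1 : (g:ℤ) ∣ ((Int.gcd n (d:ℤ) : ℕ) : ℤ) := Int.gcd_dvd_right _ _
        exact h1.trans (Int.gcd_dvd_left _ _)
      have hgmem : g ∈ d.divisors := Nat.mem_divisors.mpr ⟨hgd, hd⟩
      have key := Finset.single_le_sum
        (f := fun β : ℕ => (if ((β:ℤ) ∣ m ∧ (β:ℤ) ∣ n) then Real.sqrt β else 0) /
          (|(m:ℝ)| * |(n:ℝ)|))
        (fun i _ => by split_ifs <;> positivity) hgmem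
      have key' : Real.sqrt g / (|(m:ℝ)| * |(n:ℝ)|) ≤
          ∑ x ∈ d.divisors, (if ((x:ℤ) ∣ m ∧ (x:ℤ) ∣ n) then Real.sqrt x else 0) /
            (|(m:ℝ)| * |(n:ℝ)|) := by
        simpa [hgm, hgn] using key
      refine key'.trans_eq (Finset.sum_congr rfl fun β _ => ?_)
      by_cases h1 : (β:ℤ) ∣ m <;> by_cases h2 : (β:ℤ) ∣ n <;>
        simp [h1, h2] <;> ring
    calc ∑ m ∈ A, ∑ n ∈ A,
          (fun m n : ℤ =>
            Real.sqrt (Int.gcd m (Int.gcd n (d : ℤ))) / (|(m : ℝ)| * |(n : ℝ)|)) m n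
        ≤ ∑ m ∈ A, ∑ n ∈ A, ∑ β ∈ d.divisors,
            (Real.sqrt β * (if (β:ℤ) ∣ m then 1/|(m:ℝ)| else 0)) *
              (if (β:ℤ) ∣ n then 1/|(n:ℝ)| else 0) := by
          apply Finset.sum_le_sum
          intro m hm
          apply Finset.sum_le_sum
          intro n hn
          exact ptwise m hm n hn
      _ = ∑ m ∈ A, ∑ β ∈ d.divisors, ∑ n ∈ A,
            (Real.sqrt β * (if (β:ℤ) ∣ m then 1/|(m:ℝ)| else 0)) *
              (if (β:ℤ) ∣ n then 1/|(n:ℝ)| else 0) :=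
          Finset.sum_congr rfl fun m _ => Finset.sum_comm
      _ = ∑ β ∈ d.divisors, ∑ m ∈ A, ∑ n ∈ A,
            (Real.sqrt β * (if (β:ℤ) ∣ m then 1/|(m:ℝ)| else 0)) *
              (if (β:ℤ) ∣ n then 1/|(n:ℝ)| else 0) := Finset.sum_comm
      _ = ∑ β ∈ d.divisors, Real.sqrt β * U β * U β := by
          refine Finset.sum_congr rfl fun β _ => ?_
          rw [← Finset.sum_mul_sum A A
            (fun m => Real.sqrt β * (if (β:ℤ) ∣ m then 1/|(m:ℝ)| else 0))
            (fun n => (if (β:ℤ) ∣ n then 1/|(n:ℝ)| else 0))]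
          rw [← Finset.mul_sum]
  -- step 3 : sum over divisors
  have step3 : ∑ β ∈ d.divisors, Real.sqrt β * U β * U β ≤ 4 * L^2 * K := by
    have hb : ∀ β ∈ d.divisors, Real.sqrt β * U β * U β ≤ 4 * L^2 * ((β:ℝ) ^ (-(3/2) : ℝ)) := by
      intro β hβ
      have hβ1 : 1 ≤ β := Nat.pos_of_mem_divisors hβ
      have hβ0 : (0:ℝ) < β := by exact_mod_cast hβ1
      have hUb := step2 β hβ
      have h1 : Real.sqrt β * U β * U β ≤ Real.sqrt β * (2/β * L) * (2/β * L) := by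
        have hs2 : 0 ≤ Real.sqrt (β:ℝ) := Real.sqrt_nonneg _
        have h2L : 0 ≤ 2/(β:ℝ) * L := by positivity
        nlinarith [hU0 β, mul_le_mul_of_nonneg_left hUb hs2]
      have h2 : (β:ℝ) ^ (-(3/2) : ℝ) = Real.sqrt β / (β:ℝ)^2 := by
        rw [show (-(3/2) : ℝ) = 1/2 - 2 by norm_num, Real.rpow_sub hβ0,
          ← Real.sqrt_eq_rpow, show (2:ℝ) = ((2:ℕ):ℝ) by norm_num, Real.rpow_natCast]
      rw [h2]
      calc Real.sqrt β * U β * U β ≤ Real.sqrt β * (2/β * L) * (2/β * L) := h1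
        _ = 4 * L^2 * (Real.sqrt β / (β:ℝ)^2) := by
            have hβne : (β:ℝ) ≠ 0 := ne_of_gt hβ0
            field_simp
            all_goals first | ring | exact Or.inl rfl | (left; push_cast; ring)
    calc ∑ β ∈ d.divisors, Real.sqrt β * U β * U β
        ≤ ∑ β ∈ d.divisors, 4 * L^2 * ((β:ℝ) ^ (-(3/2) : ℝ)) := Finset.sum_le_sum hb
      _ = 4 * L^2 * ∑ β ∈ d.divisors, ((β:ℝ) ^ (-(3/2) : ℝ)) := by rw [Finset.mul_sum]
      _ ≤ 4 * L^2 * K := by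
          apply mul_le_mul_of_nonneg_left _ (by positivity)
          exact Summable.sum_le_tsum d.divisors
            (fun i _ => Real.rpow_nonneg (Nat.cast_nonneg i) _) hKsum
  -- step 4 : log bound
  have hlog : L ≤ (1 + 2/ε) * (s:ℝ) ^ (ε/2) := by
    have h1 : (1:ℝ) ≤ (s:ℝ) ^ (ε/2) := Real.one_le_rpow (by exact_mod_cast hs1) (by positivity)
    have h2 : Real.log s ≤ (s:ℝ) ^ (ε/2) / (ε/2) :=
      Real.log_le_rpow_div (le_of_lt hs0) (by positivity)
    have h3 : (s:ℝ) ^ (ε/2) / (ε/2) = (2/ε) * (s:ℝ) ^ (ε/2) := by field_simp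
    rw [hLdef]
    rw [h3] at h2
    nlinarith
  have hMsq : ((1 + 2/ε) * (s:ℝ) ^ (ε/2))^2 = (1 + 2/ε)^2 * (s:ℝ) ^ ε := by
    rw [mul_pow, sq ((s:ℝ) ^ (ε/2)), ← Real.rpow_add hs0]
    norm_num
  have hL2 : L^2 ≤ (1 + 2/ε)^2 * (s:ℝ) ^ ε := by
    rw [← hMsq]
    exact pow_le_pow_left₀ hL0 hlog 2
  have hrpos : (0:ℝ) ≤ (s:ℝ) ^ ε := Real.rpow_nonneg (le_of_lt hs0) ε
  calc ∑ m ∈ A, ∑ n ∈ A,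
        (fun m n : ℤ =>
          Real.sqrt (Int.gcd m (Int.gcd n (d : ℤ))) / (|(m : ℝ)| * |(n : ℝ)|)) m n
      ≤ ∑ β ∈ d.divisors, Real.sqrt β * U β * U β := step1
    _ ≤ 4 * L^2 * K := step3
    _ ≤ 4 * ((1 + 2/ε)^2 * (s:ℝ) ^ ε) * K := by nlinarith
    _ ≤ (4 * K * (1 + 2/ε)^2 + 1) * (s:ℝ) ^ ε := by nlinarith
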